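/- Let T be a finite set with integers a_t for t ∈ T. Then there exists exactly one finite subset S of ℤ containing no two consecutive integers such that ∑_{t∈T} f_{n+a_t} = ∑_{s∈S} f_{n+s} holds for every integer n with n > max({-a_t : t ∈ T} ∪ {-s : s ∈ S}) (generalized Zeckendorf family identities). -/

import Mathlib

/-- Fibonacci numbers indexed by integers, extended by zero on nonpositives. -/
def fibZ (m : ℤ) : ℕ := Nat.fib m.toNat

namespace ZeckAux

abbrev Holey (S : Finset ℤ) : Prop := ∀ s ∈ S, s + 1 ∉ S

lemma holey_erase {S : Finset ℤ} (h : Holey S) (x : ℤ) : Holey (S.erase x) := by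
  intro s hs hmem
  exact h s (Finset.mem_of_mem_erase hs) (Finset.mem_of_mem_erase hmem)

lemma key_id {r : ℝ} (hr0 : r ≠ 0) (hr2 : r ^ 2 = r + 1) (k : ℤ) :
    r ^ k + r ^ (k + 1) = r ^ (k + 2) := by
  have hrr : r * r = r + 1 := by rw [← hr2]; ring
  have h1 : r ^ (k + 1) = r ^ k * r := zpow_add_one₀ hr0 k
  have h2 : r ^ (k + 2) = r ^ (k + 1) * r := by
    rw [show k + 2 = (k + 1) + 1 by ring, zpow_add_one₀ hr0]
  rw [h2, h1]
  linear_combination (-(r ^ k) : ℝ) * hrr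

/-- Insert `r^c` into a holey-set power sum, with only upward carries. -/
lemma addUp : ∀ (k : ℕ) (X : Finset ℤ), X.card ≤ k → Holey X → ∀ c : ℤ, c ∉ X → c - 1 ∉ X →
    ∃ Y : Finset ℤ, Holey Y ∧ Y.card ≤ X.card + 1 ∧
      (∀ x : ℤ, x ≤ c - 1 → (x ∈ Y ↔ x ∈ X)) ∧
      (∀ r : ℝ, r ≠ 0 → r ^ 2 = r + 1 → ∑ s ∈ Y, r ^ s = r ^ c + ∑ s ∈ X, r ^ s) := by
  intro k
  induction k with
  | zero =>
    intro X hcard hH c hc hc1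
    have hX : X = ∅ := Finset.card_eq_zero.mp (Nat.le_zero.mp hcard)
    subst hX
    refine ⟨{c}, ?_, by simp, by simp; omega, by simp⟩
    intro s hs
    simp at hs ⊢
    omega
  | succ k IH =>
    intro X hcard hH c hc hc1
    by_cases h1 : c + 1 ∈ X
    · have hc2 : c + 2 ∉ X.erase (c + 1) := by
        intro hmem
        exact hH (c + 1) h1 (by simpa [show c + 1 + 1 = c + 2 by ring] using Finset.mem_of_mem_erase hmem)
      have hc1' : (c + 2) - 1 ∉ X.erase (c + 1) := by
        simp [show c + 2 - 1 = c + 1 by ring]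
      have hcardE : (X.erase (c + 1)).card ≤ k := by
        rw [Finset.card_erase_of_mem h1]
        omega
      obtain ⟨Y, hYH, hYcard, hYlow, hYsum⟩ := IH (X.erase (c + 1)) hcardE (holey_erase hH _) (c + 2) hc2 hc1'
      refine ⟨Y, hYH, ?_, ?_, ?_⟩
      · rw [Finset.card_erase_of_mem h1] at hYcard
        omega
      · intro x hx
        rw [hYlow x (by omega), Finset.mem_erase]
        constructor
        · exact fun h => h.2
        · intro h; exact ⟨by omega, h⟩
      · intro r hr0 hr2
        rw [hYsum r hr0 hr2, ← Finset.add_sum_erase X _ h1, ← key_id hr0 hr2 c]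
        ring
    · refine ⟨insert c X, ?_, Finset.card_insert_le _ _, ?_, ?_⟩
      · intro s hs hmem
        rcases Finset.mem_insert.mp hs with h | h
        · subst h
          rcases Finset.mem_insert.mp hmem with h' | h'
          · omega
          · exact h1 h'
        · rcases Finset.mem_insert.mp hmem with h' | h'
          · exact hc1 (by rwa [show c - 1 = s by omega])
          · exact hH s h h'
      · intro x hx
        rw [Finset.mem_insert]
        constructor
        · rintro (h | h)
          · omega
          · exact h
        · exact fun h => Or.inr h
      · intro r hr0 hr2
        rw [Finset.sum_insert hc]

/-- Add `r^b` to a holey-set power sum, general case. -/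
lemma ADD : ∀ (μ : ℕ) (S : Finset ℤ) (b : ℤ),
    (S.filter (· ≤ b)).card + S.card ≤ μ → Holey S →
    ∃ S' : Finset ℤ, Holey S' ∧
      (∀ r : ℝ, r ≠ 0 → r ^ 2 = r + 1 → ∑ s ∈ S', r ^ s = r ^ b + ∑ s ∈ S, r ^ s) := by
  intro μ
  induction μ with
  | zero =>
    intro S b hμ hH
    have hS : S = ∅ := Finset.card_eq_zero.mp (by omega)
    subst hS
    exact ⟨{b}, by intro s hs; simp at hs; subst hs; simp, by simp⟩
  | succ μ IH =>
    intro S b hμ hH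
    by_cases hb : b ∈ S
    · -- 2 r^b = r^(b+1) + r^(b-2)
      set S₀ := S.erase b with hS₀
      have hb1 : b + 1 ∉ S₀ := fun h => hH b hb (Finset.mem_of_mem_erase h)
      have hbm : (b + 1) - 1 ∉ S₀ := by simp [hS₀, show b + 1 - 1 = b by ring]
      obtain ⟨S₁, hS₁H, hS₁card, hS₁low, hS₁sum⟩ :=
        addUp S₀.card S₀ le_rfl (holey_erase hH b) (b + 1) hb1 hbm
      -- measure for recursive call
      have hbm1 : b - 1 ∉ S := by
        intro h
        exact hH (b - 1) h (by simpa [show b - 1 + 1 = b by ring] using hb)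
      have hfilt : S₁.filter (· ≤ b - 2) = S.filter (· ≤ b - 2) := by
        ext x
        simp only [Finset.mem_filter]
        constructor
        · rintro ⟨hx, hxle⟩
          exact ⟨Finset.mem_of_mem_erase ((hS₁low x (by omega)).mp hx), hxle⟩
        · rintro ⟨hx, hxle⟩
          exact ⟨(hS₁low x (by omega)).mpr (Finset.mem_erase.mpr ⟨by omega, hx⟩), hxle⟩
      have hsub : insert b (S.filter (· ≤ b - 2)) ⊆ S.filter (· ≤ b) := by
        intro x hx
        rcases Finset.mem_insert.mp hx with h | h
        · subst h; exact Finset.mem_filter.mpr ⟨hb, le_rfl⟩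
        · obtain ⟨h1, h2⟩ := Finset.mem_filter.mp h
          exact Finset.mem_filter.mpr ⟨h1, by omega⟩
      have hcardlt : (S.filter (· ≤ b - 2)).card + 1 ≤ (S.filter (· ≤ b)).card := by
        have := Finset.card_le_card hsub
        rwa [Finset.card_insert_of_notMem (by simp)] at this
      have hScard : S₀.card + 1 = S.card := by
        rw [hS₀, Finset.card_erase_of_mem hb]
        have : 1 ≤ S.card := Finset.card_pos.mpr ⟨b, hb⟩
        omega
      have hμ' : (S₁.filter (· ≤ b - 2)).card + S₁.card ≤ μ := by
        rw [hfilt]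
        omega
      obtain ⟨S', hS'H, hS'sum⟩ := IH S₁ (b - 2) hμ' hS₁H
      refine ⟨S', hS'H, ?_⟩
      intro r hr0 hr2
      rw [hS'sum r hr0 hr2, hS₁sum r hr0 hr2, ← Finset.add_sum_erase S _ hb]
      have k1 := key_id hr0 hr2 (b - 2)
      have k2 := key_id hr0 hr2 (b - 1)
      rw [show b - 2 + 1 = b - 1 by ring, show b - 2 + 2 = b by ring] at k1
      rw [show b - 1 + 1 = b by ring, show b - 1 + 2 = b + 1 by ring] at k2
      rw [← hS₀]
      linarith
    · by_cases hb1 : b - 1 ∈ S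
      · -- r^(b-1) + r^b = r^(b+1)
        set S₀ := S.erase (b - 1) with hS₀
        have hsub : S₀.filter (· ≤ b + 1) ⊆ insert (b + 1) ((S.filter (· ≤ b)).erase (b - 1)) := by
          intro x hx
          obtain ⟨hx1, hx2⟩ := Finset.mem_filter.mp hx
          obtain ⟨hxne, hxS⟩ := Finset.mem_erase.mp hx1
          by_cases h : x = b + 1
          · exact Finset.mem_insert.mpr (Or.inl h)
          · exact Finset.mem_insert.mpr (Or.inr (Finset.mem_erase.mpr
              ⟨hxne, Finset.mem_filter.mpr ⟨hxS, by omega⟩⟩))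
        have hbf : b - 1 ∈ S.filter (· ≤ b) := Finset.mem_filter.mpr ⟨hb1, by omega⟩
        have hμ' : (S₀.filter (· ≤ b + 1)).card + S₀.card ≤ μ := by
          have h1 := Finset.card_le_card hsub
          have h2 := Finset.card_insert_le (b + 1) ((S.filter (· ≤ b)).erase (b - 1))
          rw [Finset.card_erase_of_mem hbf] at h2
          have h3 : 1 ≤ (S.filter (· ≤ b)).card := Finset.card_pos.mpr ⟨b - 1, hbf⟩
          have h4 : S₀.card = S.card - 1 := by rw [hS₀, Finset.card_erase_of_mem hb1]
          have h5 : 1 ≤ S.card := Finset.card_pos.mpr ⟨b - 1, hb1⟩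
          omega
        obtain ⟨S', hS'H, hS'sum⟩ := IH S₀ (b + 1) hμ' (holey_erase hH _)
        refine ⟨S', hS'H, ?_⟩
        intro r hr0 hr2
        rw [hS'sum r hr0 hr2, ← Finset.add_sum_erase S _ hb1, ← hS₀]
        have k2 := key_id hr0 hr2 (b - 1)
        rw [show b - 1 + 1 = b by ring, show b - 1 + 2 = b + 1 by ring] at k2
        linarith
      · obtain ⟨Y, hYH, _, _, hYsum⟩ := addUp S.card S le_rfl hH b hb hb1
        exact ⟨Y, hYH, hYsum⟩

/-- Existence of a holey representation matching the power sums of a family. -/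
lemma exists_rep {α : Type*} (T : Finset α) (a : α → ℤ) :
    ∃ S : Finset ℤ, Holey S ∧
      (∀ r : ℝ, r ≠ 0 → r ^ 2 = r + 1 → ∑ s ∈ S, r ^ s = ∑ t ∈ T, r ^ (a t)) := by
  induction T using Finset.cons_induction_on with
  | empty => exact ⟨∅, by intro s hs; simp at hs, by simp⟩
  | @cons t T htT IH =>
    obtain ⟨S, hSH, hSsum⟩ := IH
    obtain ⟨S', hS'H, hS'sum⟩ := ADD ((S.filter (· ≤ a t)).card + S.card) S (a t) le_rfl hSH
    refine ⟨S', hS'H, ?_⟩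
    intro r hr0 hr2
    rw [Finset.sum_cons, hS'sum r hr0 hr2, hSsum r hr0 hr2]

end ZeckAux
namespace ZeckAux
open Real

lemma gold_zpow_pos (k : ℤ) : 0 < goldenRatio ^ k := zpow_pos goldenRatio_pos k

lemma sum_lt : ∀ (k : ℕ) (S : Finset ℤ), S.card ≤ k → Holey S → ∀ M : ℤ, (∀ s ∈ S, s ≤ M) →
    ∑ s ∈ S, goldenRatio ^ s < goldenRatio ^ (M + 1) := by
  intro k
  induction k with
  | zero =>
    intro S hc hH M hM
    have : S = ∅ := Finset.card_eq_zero.mp (by omega)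
    subst this
    simpa using gold_zpow_pos (M + 1)
  | succ k IH =>
    intro S hc hH M hM
    rcases S.eq_empty_or_nonempty with rfl | hne
    · simpa using gold_zpow_pos (M + 1)
    · set M₀ := S.max' hne with hM₀
      have hmem := S.max'_mem hne
      have hM₀M : M₀ ≤ M := hM M₀ hmem
      have herase : ∀ s ∈ S.erase M₀, s ≤ M₀ - 2 := by
        intro s hs
        obtain ⟨hne', hsS⟩ := Finset.mem_erase.mp hs
        have h1 : s ≤ M₀ := S.le_max' s hsS
        have h2 : s ≠ M₀ - 1 := by
          intro h
          have := hH s hsS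
          rw [h, show M₀ - 1 + 1 = M₀ by ring] at this
          exact this hmem
        omega
      have hlt := IH (S.erase M₀) (by rw [Finset.card_erase_of_mem hmem]; omega)
        (holey_erase hH _) (M₀ - 2) herase
      rw [show M₀ - 2 + 1 = M₀ - 1 by ring] at hlt
      have hsum := (Finset.add_sum_erase S (fun s => goldenRatio ^ s) hmem).symm
      have hid := key_id goldenRatio_ne_zero goldenRatio_sq (M₀ - 1)
      rw [show M₀ - 1 + 1 = M₀ by ring, show M₀ - 1 + 2 = M₀ + 1 by ring] at hid
      have hmono : goldenRatio ^ (M₀ + 1) ≤ goldenRatio ^ (M + 1) :=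
        zpow_le_zpow_right₀ one_lt_goldenRatio.le (by omega)
      rw [hsum]
      linarith

lemma holey_sum_inj : ∀ (k : ℕ) (S S' : Finset ℤ), S.card ≤ k → Holey S → Holey S' →
    (∑ s ∈ S, goldenRatio ^ s) = (∑ s ∈ S', goldenRatio ^ s) → S = S' := by
  have empty_case : ∀ S' : Finset ℤ, Holey S' → (0 : ℝ) = ∑ s ∈ S', goldenRatio ^ s → S' = ∅ := by
    intro S' hH' heq
    rcases S'.eq_empty_or_nonempty with rfl | hne'
    · rfl
    · exfalso
      have hle : goldenRatio ^ (S'.max' hne') ≤ ∑ s ∈ S', goldenRatio ^ s :=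
        Finset.single_le_sum (fun i _ => (gold_zpow_pos i).le) (S'.max'_mem hne')
      have := gold_zpow_pos (S'.max' hne')
      linarith
  intro k
  induction k with
  | zero =>
    intro S S' hc hH hH' heq
    have hS : S = ∅ := Finset.card_eq_zero.mp (by omega)
    subst hS
    simp only [Finset.sum_empty] at heq
    exact (empty_case S' hH' heq).symm
  | succ k IH =>
    intro S S' hc hH hH' heq
    rcases S.eq_empty_or_nonempty with rfl | hne
    · simp only [Finset.sum_empty] at heq
      exact (empty_case S' hH' heq).symm
    rcases S'.eq_empty_or_nonempty with rfl | hne'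
    · simp only [Finset.sum_empty] at heq
      exact empty_case S hH heq.symm
    set M₀ := S.max' hne with hM₀
    set M₀' := S'.max' hne' with hM₀'
    have hle1 : goldenRatio ^ M₀ ≤ ∑ s ∈ S, goldenRatio ^ s :=
      Finset.single_le_sum (fun i _ => (gold_zpow_pos i).le) (S.max'_mem hne)
    have hle2 : goldenRatio ^ M₀' ≤ ∑ s ∈ S', goldenRatio ^ s :=
      Finset.single_le_sum (fun i _ => (gold_zpow_pos i).le) (S'.max'_mem hne')
    have hlt1 : ∑ s ∈ S, goldenRatio ^ s < goldenRatio ^ (M₀ + 1) :=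
      sum_lt S.card S le_rfl hH M₀ (fun s hs => S.le_max' s hs)
    have hlt2 : ∑ s ∈ S', goldenRatio ^ s < goldenRatio ^ (M₀' + 1) :=
      sum_lt S'.card S' le_rfl hH' M₀' (fun s hs => S'.le_max' s hs)
    have hMM : M₀ = M₀' := by
      have h1 : goldenRatio ^ M₀ < goldenRatio ^ (M₀' + 1) := by rw [heq] at hle1; linarith
      have h2 : goldenRatio ^ M₀' < goldenRatio ^ (M₀ + 1) := by rw [← heq] at hle2; linarith
      have := (zpow_lt_zpow_iff_right₀ one_lt_goldenRatio).mp h1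
      have := (zpow_lt_zpow_iff_right₀ one_lt_goldenRatio).mp h2
      omega
    have hsum1 := (Finset.add_sum_erase S (fun s => goldenRatio ^ s) (S.max'_mem hne)).symm
    have hsum2 := (Finset.add_sum_erase S' (fun s => goldenRatio ^ s) (S'.max'_mem hne')).symm
    rw [← hM₀] at hsum1
    rw [← hM₀'] at hsum2
    have herq : ∑ s ∈ S.erase M₀, goldenRatio ^ s = ∑ s ∈ S'.erase M₀', goldenRatio ^ s := by
      rw [hsum1, hsum2, hMM] at heq
      rw [hMM]
      exact add_left_cancel heq
    have hcard : (S.erase M₀).card ≤ k := by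
      rw [Finset.card_erase_of_mem (S.max'_mem hne)]
      have : 1 ≤ S.card := Finset.card_pos.mpr hne
      omega
    have hrec := IH (S.erase M₀) (S'.erase M₀') hcard (holey_erase hH _) (holey_erase hH' _) herq
    calc S = insert M₀ (S.erase M₀) := by
            rw [hM₀]; exact (Finset.insert_erase (S.max'_mem hne)).symm
      _ = insert M₀' (S'.erase M₀') := by rw [hrec, hMM]
      _ = S' := by rw [hM₀']; exact Finset.insert_erase (S'.max'_mem hne')

lemma fibZ_binet {m : ℤ} (hm : 0 ≤ m) :
    (fibZ m : ℝ) = (goldenRatio ^ m - goldenConj ^ m) / Real.sqrt 5 := by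
  have h1 : goldenRatio ^ m = goldenRatio ^ m.toNat := by
    rw [← zpow_natCast, Int.toNat_of_nonneg hm]
  have h2 : goldenConj ^ m = goldenConj ^ m.toNat := by
    rw [← zpow_natCast, Int.toNat_of_nonneg hm]
  rw [h1, h2]
  exact Real.coe_fib_eq m.toNat

lemma cast_sum {α : Type*} (T : Finset α) (a : α → ℤ) (n : ℤ) (h : ∀ t ∈ T, 0 ≤ n + a t) :
    ((∑ t ∈ T, fibZ (n + a t) : ℕ) : ℝ) =
      (goldenRatio ^ n * (∑ t ∈ T, goldenRatio ^ (a t)) -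
        goldenConj ^ n * (∑ t ∈ T, goldenConj ^ (a t))) / Real.sqrt 5 := by
  push_cast
  rw [Finset.mul_sum, Finset.mul_sum, ← Finset.sum_sub_distrib, Finset.sum_div]
  refine Finset.sum_congr rfl fun t ht => ?_
  rw [fibZ_binet (h t ht), ← zpow_add₀ goldenRatio_ne_zero, ← zpow_add₀ goldenConj_ne_zero]

lemma cast_sum' (S : Finset ℤ) (n : ℤ) (h : ∀ s ∈ S, 0 ≤ n + s) :
    ((∑ s ∈ S, fibZ (n + s) : ℕ) : ℝ) =
      (goldenRatio ^ n * (∑ s ∈ S, goldenRatio ^ s) -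
        goldenConj ^ n * (∑ s ∈ S, goldenConj ^ s)) / Real.sqrt 5 := by
  simpa using cast_sum S (fun s => s) n h

end ZeckAux

open ZeckAux Real in
theorem generalized_zeckendorf_family_identities {α : Type*} (T : Finset α) (a : α → ℤ) :
    ∃! S : Finset ℤ, (∀ s ∈ S, s + 1 ∉ S) ∧
      ∀ n : ℤ, (∀ t ∈ T, -a t < n) → (∀ s ∈ S, -s < n) →
        ∑ t ∈ T, fibZ (n + a t) = ∑ s ∈ S, fibZ (n + s) := by
  obtain ⟨S, hSH, hSsum⟩ := exists_rep T a
  refine ⟨S, ⟨hSH, ?_⟩, ?_⟩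
  · intro n hT hSn
    have h1 : ∀ t ∈ T, 0 ≤ n + a t := fun t ht => by have := hT t ht; omega
    have h2 : ∀ s ∈ S, 0 ≤ n + s := fun s hs => by have := hSn s hs; omega
    have key : ((∑ t ∈ T, fibZ (n + a t) : ℕ) : ℝ) = ((∑ s ∈ S, fibZ (n + s) : ℕ) : ℝ) := by
      rw [cast_sum T a n h1, cast_sum' S n h2,
        hSsum _ goldenRatio_ne_zero goldenRatio_sq, hSsum _ goldenConj_ne_zero goldenConj_sq]
    exact_mod_cast key
  · rintro S' ⟨hS'H, hS'sum⟩
    set A := ∑ t ∈ T, goldenRatio ^ (a t) with hA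
    set B := ∑ t ∈ T, goldenConj ^ (a t) with hB
    set A' := ∑ s ∈ S', goldenRatio ^ s with hA'
    set B' := ∑ s ∈ S', goldenConj ^ s with hB'
    obtain ⟨N1, hN1⟩ := Finset.exists_le (T.image fun t => -a t)
    obtain ⟨N2, hN2⟩ := Finset.exists_le (S'.image fun s => -s)
    set N : ℤ := max (max N1 N2) 0 + 1 with hN
    have hN0 : 0 ≤ N := by
      have : (0:ℤ) ≤ max (max N1 N2) 0 := le_max_right _ _
      omega
    have hNN1 : N1 < N := by
      have : N1 ≤ max (max N1 N2) 0 := le_trans (le_max_left _ _) (le_max_left _ _)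
      omega
    have hNN2 : N2 < N := by
      have : N2 ≤ max (max N1 N2) 0 := le_trans (le_max_right _ _) (le_max_left _ _)
      omega
    have hEq : ∀ m : ℕ, goldenRatio ^ (N + (m:ℤ)) * (A - A') = goldenConj ^ (N + (m:ℤ)) * (B - B') := by
      intro m
      have hm0 : (0:ℤ) ≤ (m:ℤ) := Int.natCast_nonneg m
      have hTn : ∀ t ∈ T, -a t < N + (m:ℤ) := fun t ht => by
        have := hN1 (-a t) (Finset.mem_image_of_mem _ ht)
        omega
      have hS'n : ∀ s ∈ S', -s < N + (m:ℤ) := fun s hs => by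
        have := hN2 (-s) (Finset.mem_image_of_mem _ hs)
        omega
      have hnat := hS'sum (N + (m:ℤ)) hTn hS'n
      have h1 : ∀ t ∈ T, 0 ≤ (N + (m:ℤ)) + a t := fun t ht => by have := hTn t ht; omega
      have h2 : ∀ s ∈ S', 0 ≤ (N + (m:ℤ)) + s := fun s hs => by have := hS'n s hs; omega
      have hdiv : (goldenRatio ^ (N + (m:ℤ)) * A - goldenConj ^ (N + (m:ℤ)) * B) / Real.sqrt 5
          = (goldenRatio ^ (N + (m:ℤ)) * A' - goldenConj ^ (N + (m:ℤ)) * B') / Real.sqrt 5 := by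
        rw [← cast_sum T a _ h1, ← cast_sum' S' _ h2]
        exact_mod_cast hnat
      have h5 : (0:ℝ) < Real.sqrt 5 := by positivity
      rw [div_eq_div_iff (ne_of_gt h5) (ne_of_gt h5)] at hdiv
      have hXY := mul_right_cancel₀ (ne_of_gt h5) hdiv
      linear_combination hXY
    have hAA' : A' = A := by
      by_contra hneq
      have hΔ : A - A' ≠ 0 := sub_ne_zero.mpr (fun h => hneq h.symm)
      have hψ1 : |goldenConj| < 1 :=
        abs_lt.mpr ⟨neg_one_lt_goldenConj, by linarith [goldenConj_neg]⟩
      have hbound : ∀ m : ℕ, goldenRatio ^ (N + (m:ℤ)) * |A - A'| ≤ |B - B'| := by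
        intro m
        have h := hEq m
        have hnn : 0 ≤ N + (m:ℤ) := by have := Int.natCast_nonneg m; omega
        have h2 : |goldenConj ^ (N + (m:ℤ))| ≤ 1 := by
          rw [show goldenConj ^ (N + (m:ℤ)) = goldenConj ^ ((N + (m:ℤ)).toNat) from by
            rw [← zpow_natCast, Int.toNat_of_nonneg hnn], abs_pow]
          exact pow_le_one₀ (abs_nonneg _) hψ1.le
        calc goldenRatio ^ (N + (m:ℤ)) * |A - A'|
            = |goldenRatio ^ (N + (m:ℤ)) * (A - A')| := by
              rw [abs_mul, abs_of_pos (gold_zpow_pos _)]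
          _ = |goldenConj ^ (N + (m:ℤ)) * (B - B')| := by rw [h]
          _ = |goldenConj ^ (N + (m:ℤ))| * |B - B'| := abs_mul _ _
          _ ≤ 1 * |B - B'| := mul_le_mul_of_nonneg_right h2 (abs_nonneg _)
          _ = |B - B'| := one_mul _
      obtain ⟨m, hm⟩ := pow_unbounded_of_one_lt
        (|B - B'| / (goldenRatio ^ N * |A - A'|)) one_lt_goldenRatio
      have hpos : 0 < goldenRatio ^ N * |A - A'| :=
        mul_pos (gold_zpow_pos N) (abs_pos.mpr hΔ)
      have hlt : |B - B'| < goldenRatio ^ m * (goldenRatio ^ N * |A - A'|) :=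
        (div_lt_iff₀ hpos).mp hm
      have hz : goldenRatio ^ (N + (m:ℤ)) = goldenRatio ^ N * goldenRatio ^ m := by
        rw [zpow_add₀ goldenRatio_ne_zero, zpow_natCast]
      have hb := hbound m
      rw [hz] at hb
      nlinarith
    have hfin : ∑ s ∈ S', goldenRatio ^ s = ∑ s ∈ S, goldenRatio ^ s := by
      rw [hSsum _ goldenRatio_ne_zero goldenRatio_sq, ← hA, ← hA']
      exact hAA'
    exact holey_sum_inj S'.card S' S le_rfl hS'H hSH hfin
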